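/- Let Σ̂ be symmetric, Z symmetric, λ > 0, and set Y = (1/λ)Σ̂ − Z. Then Θ = (1/2)(−Y + √(YᵀY + (4/λ)I)) is symmetric positive definite and satisfies the stationarity equation −Θ^{-1} + Σ̂ + λ(Θ − Z) = 0. -/

import Mathlib

open scoped Matrix

/-- The square root of a positive semidefinite matrix, as `Matrix.PosSemidef.sqrt` was defined
in the older Mathlib (removed since). -/
noncomputable def Matrix.PosSemidef.sqrt {n : Type*} [Fintype n] [DecidableEq n]
    {A : Matrix n n ℝ} (hA : A.PosSemidef) : Matrix n n ℝ :=
  hA.1.eigenvectorUnitary.1 * Matrix.diagonal ((↑) ∘ (√·) ∘ hA.1.eigenvalues) *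
    (star hA.1.eigenvectorUnitary : Matrix n n ℝ)

theorem stmt_12 {d : ℕ} (S Z : Matrix (Fin d) (Fin d) ℝ) (lam : ℝ) (hlam : 0 < lam)
    (hS : S.IsHermitian) (hZ : Z.IsHermitian)
    (Y : Matrix (Fin d) (Fin d) ℝ) (hY : Y = (1 / lam) • S - Z)
    (hP : (Yᵀ * Y + (4 / lam) • (1 : Matrix (Fin d) (Fin d) ℝ)).PosSemidef)
    (Θ : Matrix (Fin d) (Fin d) ℝ) (hΘ : Θ = (1 / 2 : ℝ) • (-Y + hP.sqrt)) :
    Θ.IsHermitian ∧ Θ.PosDef ∧ -Θ⁻¹ + S + lam • (Θ - Z) = 0 := by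
  have hlam' : lam ≠ 0 := ne_of_gt hlam
  have hYh : Y.IsHermitian := by
    have hSt : Sᵀ = S := by rw [← Matrix.conjTranspose_eq_transpose_of_trivial]; exact hS
    have hZt : Zᵀ = Z := by rw [← Matrix.conjTranspose_eq_transpose_of_trivial]; exact hZ
    rw [hY]
    simp [Matrix.IsHermitian, Matrix.conjTranspose_eq_transpose_of_trivial,
      Matrix.transpose_sub, Matrix.transpose_smul, hSt, hZt]
  set U : Matrix (Fin d) (Fin d) ℝ := (hYh.eigenvectorUnitary : Matrix (Fin d) (Fin d) ℝ)
    with hUdef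
  set e : Fin d → ℝ := hYh.eigenvalues with hedef
  have hUU : star U * U = 1 := Matrix.mem_unitaryGroup_iff'.mp hYh.eigenvectorUnitary.2
  have hUU' : U * star U = 1 := Matrix.mem_unitaryGroup_iff.mp hYh.eigenvectorUnitary.2
  set C : (Fin d → ℝ) → Matrix (Fin d) (Fin d) ℝ :=
    fun g => U * Matrix.diagonal g * star U with hCdef
  have conj_mul : ∀ g h : Fin d → ℝ, C g * C h = C (fun i => g i * h i) := by
    intro g h
    calc C g * C h
        = U * Matrix.diagonal g * (star U * U) * Matrix.diagonal h * star U := by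
          simp only [hCdef, Matrix.mul_assoc]
      _ = U * (Matrix.diagonal g * Matrix.diagonal h) * star U := by
          rw [hUU]; simp only [Matrix.mul_assoc, Matrix.one_mul]
      _ = C (fun i => g i * h i) := by rw [Matrix.diagonal_mul_diagonal]
  have conj_add : ∀ g h : Fin d → ℝ, C g + C h = C (fun i => g i + h i) := by
    intro g h
    simp only [hCdef]
    rw [← Matrix.add_mul, ← Matrix.mul_add, Matrix.diagonal_add]
  have conj_smul : ∀ (c : ℝ) (g : Fin d → ℝ), c • C g = C (fun i => c * g i) := by
    intro c g
    have hd : Matrix.diagonal (fun i => c * g i) = c • Matrix.diagonal g := by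
      show Matrix.diagonal (c • g) = c • Matrix.diagonal g
      exact Matrix.diagonal_smul c g
    simp only [hCdef, hd, Matrix.mul_smul, Matrix.smul_mul]
  have conj_one : C (fun _ => (1 : ℝ)) = 1 := by
    simp only [hCdef, Matrix.diagonal_one, Matrix.mul_one, hUU']
  have conj_neg : ∀ g : Fin d → ℝ, -C g = C (fun i => -g i) := by
    intro g
    rw [← neg_one_smul ℝ (C g), conj_smul]
    refine congrArg C ?_
    funext i
    ring
  have hspec : Y = C e := by
    have := hYh.spectral_theorem
    simpa [hCdef, hUdef, hedef, Function.comp] using this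
  have hc : (0 : ℝ) < 4 / lam := div_pos (by norm_num) hlam
  set f : Fin d → ℝ := fun i => Real.sqrt (e i ^ 2 + 4 / lam) with hfdef
  have hfnn : ∀ i, 0 ≤ e i ^ 2 + 4 / lam := fun i =>
    add_nonneg (sq_nonneg _) hc.le
  have hfpos : ∀ i, e i < f i := by
    intro i
    have h2 : |e i| < f i := by
      rw [hfdef, ← Real.sqrt_sq_eq_abs]
      exact Real.sqrt_lt_sqrt (sq_nonneg _) (by linarith)
    linarith [le_abs_self (e i)]
  have hff : ∀ i, f i * f i = e i ^ 2 + 4 / lam := fun i => Real.mul_self_sqrt (hfnn i)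
  have hRpsd : (C f).PosSemidef := by
    simp only [hCdef, Matrix.star_eq_conjTranspose]
    exact (Matrix.PosSemidef.diagonal fun i => Real.sqrt_nonneg _).mul_mul_conjTranspose_same U
  have hYt : Yᵀ = Y := hYh
  have hsm : (4 / lam) • (1 : Matrix (Fin d) (Fin d) ℝ) = C (fun _ => 4 / lam) := by
    rw [← conj_one, conj_smul]
    simp
  have harith : (fun i => f i * f i) = fun i => e i * e i + 4 / lam := by
    funext i
    rw [hff i]
    ring
  have hR2 : (C f) ^ 2 = Yᵀ * Y + (4 / lam) • (1 : Matrix (Fin d) (Fin d) ℝ) := by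
    rw [hYt, pow_two]
    simp only [hspec, hsm, conj_mul, conj_add, harith]
  have hsqrt : hP.sqrt = C f := by
    open scoped MatrixOrder in
    have h1 : hP.sqrt = CFC.sqrt (Yᵀ * Y + (4 / lam) • (1 : Matrix (Fin d) (Fin d) ℝ)) := by
      rw [CFC.sqrt_eq_cfc, cfc_nnreal_eq_real _ _ hP.nonneg, hP.1.cfc_eq]
      simp [Matrix.IsHermitian.cfc, Matrix.PosSemidef.sqrt, Function.comp_def,
        fun i => max_eq_left (hP.eigenvalues_nonneg i)]
    open scoped MatrixOrder in
    exact h1.trans (CFC.sqrt_unique (by rw [← pow_two]; exact hR2) hRpsd.nonneg)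
  set θ : Fin d → ℝ := fun i => (1 / 2 : ℝ) * (-e i + f i) with hθdef
  have hΘd : Θ = C θ := by
    rw [hΘ, hsqrt, hspec]
    simp only [conj_neg, conj_add, conj_smul]
    rfl
  have hθpos : ∀ i, 0 < θ i := by
    intro i
    have := hfpos i
    simp only [hθdef]
    linarith
  have hΘh : Θ.IsHermitian := by
    rw [hΘd]
    simp only [hCdef, Matrix.star_eq_conjTranspose]
    exact Matrix.isHermitian_mul_mul_conjTranspose U (Matrix.isHermitian_diagonal θ)
  have hΘpd : Θ.PosDef := by
    refine Matrix.PosDef.of_dotProduct_mulVec_pos hΘh fun x hx => ?_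
    rw [hΘd]
    have hx' : (star U) *ᵥ x ≠ 0 := by
      intro h
      apply hx
      have := congrArg (fun v => U *ᵥ v) h
      simpa [Matrix.mulVec_mulVec, hUU'] using this
    have hdiag : (Matrix.diagonal θ).PosDef := Matrix.PosDef.diagonal hθpos
    have heq : star x ⬝ᵥ (C θ) *ᵥ x
        = star ((star U) *ᵥ x) ⬝ᵥ (Matrix.diagonal θ *ᵥ ((star U) *ᵥ x)) := by
      simp only [hCdef]
      rw [← Matrix.mulVec_mulVec, ← Matrix.mulVec_mulVec, Matrix.dotProduct_mulVec,
        Matrix.star_mulVec]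
      congr 1
    rw [heq]
    exact hdiag.dotProduct_mulVec_pos hx'
  have hinv : Θ⁻¹ = lam • (Y + Θ) := by
    apply Matrix.inv_eq_right_inv
    have harith2 : (fun i => θ i * (lam * (e i + θ i))) = fun _ => (1 : ℝ) := by
      funext i
      have h2 : lam * (f i * f i) = lam * e i ^ 2 + 4 := by
        rw [hff i]; field_simp
      simp only [hθdef]
      linear_combination (1 / 4 : ℝ) * h2
    simp only [hΘd, hspec, conj_add, conj_smul, conj_mul, harith2, conj_one]
  refine ⟨hΘh, hΘpd, ?_⟩
  rw [hinv, hY]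
  match_scalars <;> field_simp <;> ring
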